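/- Let H ∈ ℝ^{3×3} and let p₁, p₂, p₃, p₄ ∈ ℝ² with w_H(p_i) > 0 for i = 1,…,4. If the closed segments [p₁, p₂] and [p₃, p₄] intersect (segment ℝ p₁ p₂ ∩ segment ℝ p₃ p₄ ≠ ∅), then the closed segments [f_H(p₁), f_H(p₂)] and [f_H(p₃), f_H(p₄)] intersect as well. That is, two coplanar line segments that intersect appear as intersecting under the homography f_H. -/

import Mathlib

/-- The cross value of three points in the plane: the z-coordinate of the
cross product `(b - a) × (c - b)`. -/
noncomputable def cross (a b c : ℝ × ℝ) : ℝ :=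
  (b.1 - a.1) * (c.2 - b.2) - (b.2 - a.2) * (c.1 - b.1)

/-- The lift of a planar point `(x, y)` to `(x, y, 1) ∈ ℝ³`. -/
noncomputable def liftPt (p : ℝ × ℝ) : Fin 3 → ℝ := ![p.1, p.2, 1]

/-- The homography denominator: the third coordinate of `H ℓ(p)`. -/
noncomputable def wH (H : Matrix (Fin 3) (Fin 3) ℝ) (p : ℝ × ℝ) : ℝ :=
  H.mulVec (liftPt p) 2

/-- The planar homography induced by the matrix `H`. -/
noncomputable def fH (H : Matrix (Fin 3) (Fin 3) ℝ) (p : ℝ × ℝ) : ℝ × ℝ :=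
  (H.mulVec (liftPt p) 0 / wH H p, H.mulVec (liftPt p) 1 / wH H p)

lemma fH_mem_segment (H : Matrix (Fin 3) (Fin 3) ℝ) (p₁ p₂ q : ℝ × ℝ)
    (h1 : 0 < wH H p₁) (h2 : 0 < wH H p₂) (hq : q ∈ segment ℝ p₁ p₂) :
    fH H q ∈ segment ℝ (fH H p₁) (fH H p₂) := by
  obtain ⟨a, b, ha, hb, hab, hqe⟩ := hq
  have hlift : liftPt q = a • liftPt p₁ + b • liftPt p₂ := by
    subst hqe
    funext i
    fin_cases i <;> simp [liftPt, Prod.smul_def] <;> linarith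
  have hmv : ∀ i, H.mulVec (liftPt q) i =
      a * H.mulVec (liftPt p₁) i + b * H.mulVec (liftPt p₂) i := by
    intro i
    rw [hlift, Matrix.mulVec_add, Matrix.mulVec_smul, Matrix.mulVec_smul]
    simp
  have hwq : wH H q = a * wH H p₁ + b * wH H p₂ := hmv 2
  have hwpos : 0 < wH H q := by
    rw [hwq]
    rcases ha.lt_or_eq with h | h
    · nlinarith
    · nlinarith
  refine ⟨a * wH H p₁ / wH H q, b * wH H p₂ / wH H q,
    by positivity, by positivity, ?_, ?_⟩
  · field_simp
    linarith [hwq]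
  · have e0 := hmv 0
    have e1 := hmv 1
    unfold fH
    apply Prod.ext <;> simp [Prod.smul_def] <;> field_simp
    · rw [e0]
    · rw [e1]

theorem fH_segments_intersect (H : Matrix (Fin 3) (Fin 3) ℝ)
    (p₁ p₂ p₃ p₄ : ℝ × ℝ)
    (h1 : 0 < wH H p₁) (h2 : 0 < wH H p₂) (h3 : 0 < wH H p₃) (h4 : 0 < wH H p₄)
    (hint : segment ℝ p₁ p₂ ∩ segment ℝ p₃ p₄ ≠ ∅) :
    segment ℝ (fH H p₁) (fH H p₂) ∩ segment ℝ (fH H p₃) (fH H p₄) ≠ ∅ := by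
  obtain ⟨q, hq12, hq34⟩ := Set.nonempty_iff_ne_empty.2 hint
  exact Set.nonempty_iff_ne_empty.1
    ⟨fH H q, fH_mem_segment H p₁ p₂ q h1 h2 hq12,
      fH_mem_segment H p₃ p₄ q h3 h4 hq34⟩
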